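/- Let b, c ∈ ℂ with |b| ≤ 1, |c| ≤ 1, set u = |2c − 3b| and v = |2c|, assume u ≤ 1, and let α ∈ [0,1). Let ρ₂ be the smallest root in (0,1) of the equation (1 − α) − α(u+v) r − (7 + u v + α + u v α) r² − (8u + 6v + u α) r³ − (9 + 6 u v − α) r⁴ − (8u + 2v − u α − v α) r⁵ − (1 + u v − α − u v α) r⁶ + α u r⁷ = 0 (such a root exists). Then for every f ∈ K³_{b,c} and every z ∈ ℂ with 0 < |z| < ρ₂, one has Re(z·f'(z)/f(z)) > α. (That is, ρ₂ is the radius of starlikeness of order α for the class K³_{b,c}.) -/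

import Mathlib

open Complex Real Metric Set

lemma normSq_mobius (a ξ : ℂ) :
    Complex.normSq (1 - (starRingEnd ℂ) a * ξ) - Complex.normSq (ξ - a)
      = (1 - Complex.normSq a) * (1 - Complex.normSq ξ) := by
  simp only [Complex.normSq_apply, Complex.sub_re, Complex.sub_im, Complex.mul_re, Complex.mul_im,
    Complex.one_re, Complex.one_im, Complex.conj_re, Complex.conj_im]
  ring

lemma mobius_den_ne (a ξ : ℂ) (ha : ‖a‖ ≤ 1) (hξ : ‖ξ‖ < 1) :
    1 - (starRingEnd ℂ) a * ξ ≠ 0 := by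
  intro h
  have h1 : (starRingEnd ℂ) a * ξ = 1 := by linear_combination -h
  have : ‖(starRingEnd ℂ) a * ξ‖ < 1 := by
    rw [norm_mul, Complex.norm_conj]
    calc ‖a‖ * ‖ξ‖ ≤ 1 * ‖ξ‖ :=
      mul_le_mul_of_nonneg_right ha (norm_nonneg _)
    _ < 1 := by simpa using hξ
  rw [h1] at this; simp at this

lemma mobius_abs_lt (a ξ : ℂ) (ha : ‖a‖ < 1) (hξ : ‖ξ‖ < 1) :
    ‖(ξ - a) / (1 - (starRingEnd ℂ) a * ξ)‖ < 1 := by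
  have hden := mobius_den_ne a ξ ha.le hξ
  rw [norm_div, div_lt_one (by simpa [norm_pos_iff] using hden)]
  have h2 : Complex.normSq (ξ - a) < Complex.normSq (1 - (starRingEnd ℂ) a * ξ) := by
    have := normSq_mobius a ξ
    have h3 : 0 < (1 - Complex.normSq a) * (1 - Complex.normSq ξ) := by
      apply mul_pos <;> rw [sub_pos, Complex.normSq_eq_norm_sq] <;> nlinarith [norm_nonneg a, norm_nonneg ξ]
    linarith
  rw [Complex.normSq_eq_norm_sq, Complex.normSq_eq_norm_sq] at h2
  nlinarith [norm_nonneg (ξ - a), norm_nonneg (1 - (starRingEnd ℂ) a * ξ)]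

lemma const_of_max {h : ℂ → ℂ} (hd : DifferentiableOn ℂ h (ball 0 1))
    (hb : ∀ ζ ∈ ball (0:ℂ) 1, ‖h ζ‖ ≤ 1)
    (hnot : ¬ ∀ ζ ∈ ball (0:ℂ) 1, ‖h ζ‖ < 1) :
    ∀ ζ ∈ ball (0:ℂ) 1, h ζ = h 0 := by
  push_neg at hnot
  obtain ⟨ζ₁, hζ₁, hge⟩ := hnot
  have hmax : IsMaxOn (norm ∘ h) (ball 0 1) ζ₁ := by
    intro x hx
    simp only [Function.comp, Set.mem_setOf_eq]
    exact (hb x hx).trans hge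
  have heq := Complex.eqOn_of_isPreconnected_of_isMaxOn_norm
    (convex_ball (0:ℂ) 1).isPreconnected isOpen_ball hd hζ₁ hmax
  intro ζ hζ
  have h1 := heq hζ
  have h2 := heq (mem_ball_self one_pos)
  simp only [Function.const] at h1 h2
  rw [h1, h2]

set_option maxHeartbeats 1000000 in
lemma sp_val {h : ℂ → ℂ} (hd : DifferentiableOn ℂ h (ball 0 1))
    (hb : ∀ ζ ∈ ball (0:ℂ) 1, ‖h ζ‖ ≤ 1) {z : ℂ} (hz : z ∈ ball (0:ℂ) 1) :
    ‖h z‖ * (1 + ‖h 0‖ * ‖z‖)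
      ≤ ‖h 0‖ + ‖z‖ := by
  have hX0 : 0 ≤ ‖h z‖ := norm_nonneg _
  have hA0 : 0 ≤ ‖h 0‖ := norm_nonneg _
  have hr0 : 0 ≤ ‖z‖ := norm_nonneg _
  have hr1 : ‖z‖ < 1 := mem_ball_zero_iff.1 hz
  have hX1 : ‖h z‖ ≤ 1 := hb z hz
  have hA1 : ‖h 0‖ ≤ 1 := hb 0 (mem_ball_self one_pos)
  by_cases hstrict : ∀ ζ ∈ ball (0:ℂ) 1, ‖h ζ‖ < 1
  case neg =>
    have hcst := const_of_max hd hb hstrict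
    rw [hcst z hz]
    have h4 : ‖h 0‖ * ‖h 0‖ ≤ 1 := by nlinarith
    nlinarith [mul_le_mul_of_nonneg_right h4 hr0]
  case pos =>
  have hA1' : ‖h 0‖ < 1 := hstrict 0 (mem_ball_self one_pos)
  set a := h 0 with ha
  set G : ℂ → ℂ := fun ζ => (h ζ - a) / (1 - (starRingEnd ℂ) a * h ζ) with hG
  have hden : ∀ ζ ∈ ball (0:ℂ) 1, 1 - (starRingEnd ℂ) a * h ζ ≠ 0 := fun ζ hζ =>
    mobius_den_ne a (h ζ) hA1'.le (hstrict ζ hζ)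
  have hGd : DifferentiableOn ℂ G (ball 0 1) := by
    apply DifferentiableOn.div (hd.sub_const a)
    · exact (differentiableOn_const 1).sub ((differentiableOn_const _).mul hd)
    · exact hden
  have hmaps : MapsTo G (ball 0 1) (ball (0:ℂ) 1) := fun ζ hζ => by
    rw [mem_ball_zero_iff]
    exact mobius_abs_lt a (h ζ) hA1' (hstrict ζ hζ)
  have hG0 : G 0 = 0 := by simp [hG, ha]
  have hGz : ‖G z‖ ≤ ‖z‖ :=
    Complex.norm_le_norm_of_mapsTo_ball hGd (hmaps.mono_right ball_subset_closedBall) hG0 hr1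
  have hdenz := hden z hz
  have hdenzpos : 0 < ‖1 - (starRingEnd ℂ) a * h z‖ := by
    simpa [norm_pos_iff] using hdenz
  have hkey : ‖h z - a‖
      ≤ ‖z‖ * ‖1 - (starRingEnd ℂ) a * h z‖ := by
    have h6 : ‖G z‖
        = ‖h z - a‖ / ‖1 - (starRingEnd ℂ) a * h z‖ := by
      rw [hG]; exact norm_div _ _
    rw [h6, div_le_iff₀ hdenzpos] at hGz
    linarith
  set X := ‖h z‖ with hXdef
  set A := ‖a‖ with hAdef
  set r := ‖z‖ with hrdef
  set cc := (starRingEnd ℂ) a * h z with hcc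
  have habsc : ‖cc‖ = A * X := by
    rw [hcc, norm_mul, Complex.norm_conj]
  have hrec : cc.re ≤ A * X := (Complex.re_le_norm cc).trans habsc.le
  have e1 : (‖h z - a‖)^2 = X^2 + A^2 - 2*cc.re := by
    rw [← Complex.normSq_eq_norm_sq, Complex.normSq_sub, Complex.normSq_eq_norm_sq,
      Complex.normSq_eq_norm_sq]
    have h7 : h z * (starRingEnd ℂ) a = cc := by rw [hcc]; ring
    rw [h7]
  have e2 : (‖1 - cc‖)^2 = 1 + A^2*X^2 - 2*cc.re := by
    have h8 : Complex.normSq cc = (A*X)^2 := by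
      rw [hcc, Complex.normSq_mul, Complex.normSq_conj, Complex.normSq_eq_norm_sq,
        Complex.normSq_eq_norm_sq]; ring
    rw [← Complex.normSq_eq_norm_sq, Complex.normSq_sub, Complex.normSq_one, h8]
    simp only [one_mul, Complex.conj_re]
    ring
  have hsq : X^2 + A^2 - 2*cc.re ≤ r^2 * (1 + A^2*X^2 - 2*cc.re) := by
    have h9 := pow_le_pow_left₀ (norm_nonneg _) hkey 2
    rw [e1, mul_pow, e2] at h9
    exact h9
  have hr2 : (0:ℝ) ≤ 2*(1-r^2) := by nlinarith
  have key2 : ((1+A*r)*X - (A+r)) * ((1-A*r)*X - (A-r)) ≤ 0 := by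
    nlinarith [mul_le_mul_of_nonneg_left hrec hr2, hsq]
  by_contra hcon
  push_neg at hcon
  have h4 : A*X ≤ 1 := by nlinarith
  have F1 : 0 < (1+A*r)*X - (A+r) := by nlinarith
  have F2 : (1-A*r)*X - (A-r) ≤ 0 := by
    by_contra hF2
    push_neg at hF2
    nlinarith [mul_pos F1 hF2]
  nlinarith [mul_nonneg hr0 (sub_nonneg.2 h4)]

lemma one_sub_conj_mul_self (w : ℂ) :
    (1 : ℂ) - (starRingEnd ℂ) w * w = ((1 - Complex.normSq w : ℝ) : ℂ) := by
  push_cast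
  rw [← Complex.mul_conj w]
  ring

lemma abs_one_sub_conj_mul_self (w : ℂ) (hw : ‖w‖ < 1) :
    ‖1 - (starRingEnd ℂ) w * w‖ = 1 - (‖w‖)^2 := by
  have h1 : Complex.normSq w = (‖w‖)^2 := Complex.normSq_eq_norm_sq w
  rw [one_sub_conj_mul_self, Complex.norm_real, Real.norm_eq_abs, h1]
  exact abs_of_nonneg (by nlinarith [norm_nonneg w])

set_option maxHeartbeats 1000000 in
lemma sp_deriv {h : ℂ → ℂ} (hd : DifferentiableOn ℂ h (ball 0 1))
    (hb : ∀ ζ ∈ ball (0:ℂ) 1, ‖h ζ‖ ≤ 1) {z : ℂ} (hz : z ∈ ball (0:ℂ) 1) :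
    ‖deriv h z‖ * (1 - (‖z‖)^2) ≤ 1 - (‖h z‖)^2 := by
  have hr0 : 0 ≤ ‖z‖ := norm_nonneg _
  have hr1 : ‖z‖ < 1 := mem_ball_zero_iff.1 hz
  have hX1 : ‖h z‖ ≤ 1 := hb z hz
  by_cases hstrict : ∀ ζ ∈ ball (0:ℂ) 1, ‖h ζ‖ < 1
  case neg =>
    have hcst := const_of_max hd hb hstrict
    have hconst : h =ᶠ[nhds z] (fun _ => h 0) :=
      Filter.eventuallyEq_of_mem (isOpen_ball.mem_nhds hz) (fun ζ hζ => hcst ζ hζ)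
    rw [hconst.deriv_eq, deriv_const]
    simp only [norm_zero, zero_mul]
    nlinarith [norm_nonneg (h z)]
  case pos =>
  set a := h z with ha
  have hA1 : ‖a‖ < 1 := hstrict z hz
  set T : ℂ → ℂ := fun ζ => (ζ + z) / (1 + (starRingEnd ℂ) z * ζ) with hT
  have hTden : ∀ ζ ∈ ball (0:ℂ) 1, (1 : ℂ) + (starRingEnd ℂ) z * ζ ≠ 0 := by
    intro ζ hζ
    have h5 := mobius_den_ne (-z) ζ (by simpa using hr1.le) (mem_ball_zero_iff.1 hζ)
    have h6 : (1 : ℂ) - (starRingEnd ℂ) (-z) * ζ = 1 + (starRingEnd ℂ) z * ζ := by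
      rw [map_neg]; ring
    rwa [h6] at h5
  have hTmaps : ∀ ζ ∈ ball (0:ℂ) 1, T ζ ∈ ball (0:ℂ) 1 := by
    intro ζ hζ
    have h5 := mobius_abs_lt (-z) ζ (by simpa using hr1) (mem_ball_zero_iff.1 hζ)
    rw [mem_ball_zero_iff, hT]
    have h6 : (ζ - -z) / (1 - (starRingEnd ℂ) (-z) * ζ)
        = (ζ + z) / (1 + (starRingEnd ℂ) z * ζ) := by
      rw [map_neg]; ring_nf
    rwa [h6] at h5
  have hT0 : T 0 = z := by simp [hT]
  have hTd : DifferentiableOn ℂ T (ball 0 1) := by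
    apply DifferentiableOn.div (differentiableOn_id.add_const z)
    · exact (differentiableOn_const 1).add ((differentiableOn_const _).mul differentiableOn_id)
    · exact hTden
  set H : ℂ → ℂ := fun ζ => h (T ζ) with hH
  have hHd : DifferentiableOn ℂ H (ball 0 1) := hd.comp hTd hTmaps
  have hHstrict : ∀ ζ ∈ ball (0:ℂ) 1, ‖H ζ‖ < 1 := fun ζ hζ =>
    hstrict _ (hTmaps ζ hζ)
  have hH0 : H 0 = a := by rw [hH]; simp only [hT0, ha]
  set G : ℂ → ℂ := fun ζ => (H ζ - a) / (1 - (starRingEnd ℂ) a * H ζ) with hG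
  have hGden : ∀ ζ ∈ ball (0:ℂ) 1, (1:ℂ) - (starRingEnd ℂ) a * H ζ ≠ 0 := fun ζ hζ =>
    mobius_den_ne a (H ζ) hA1.le (hHstrict ζ hζ)
  have hGd : DifferentiableOn ℂ G (ball 0 1) := by
    apply DifferentiableOn.div (hHd.sub_const a)
    · exact (differentiableOn_const 1).sub ((differentiableOn_const _).mul hHd)
    · exact hGden
  have hG0 : G 0 = 0 := by rw [hG]; simp [hH0]
  have hGmaps : MapsTo G (ball 0 1) (ball (G 0) 1) := by
    rw [hG0]
    intro ζ hζ
    rw [mem_ball_zero_iff]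
    exact mobius_abs_lt a (H ζ) hA1 (hHstrict ζ hζ)
  have hSchwarz : ‖deriv G 0‖ ≤ 1 / 1 :=
    Complex.norm_deriv_le_div_of_mapsTo_ball hGd (hGmaps.mono_right ball_subset_closedBall) one_pos
  -- compute deriv G 0
  have hzd : DifferentiableAt ℂ h z := hd.differentiableAt (isOpen_ball.mem_nhds hz)
  have hTder : HasDerivAt T (1 - (starRingEnd ℂ) z * z) 0 := by
    have hnum : HasDerivAt (fun ζ : ℂ => ζ + z) 1 0 := (hasDerivAt_id 0).add_const z
    have hden : HasDerivAt (fun ζ : ℂ => (1:ℂ) + (starRingEnd ℂ) z * ζ)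
        ((starRingEnd ℂ) z) 0 := by
      simpa using (((hasDerivAt_id (0:ℂ)).const_mul ((starRingEnd ℂ) z)).const_add 1)
    have h10 : ((1:ℂ) + (starRingEnd ℂ) z * 0) ≠ 0 := by simp
    have := hnum.div hden h10
    refine this.congr_deriv ?_
    simp only [mul_zero, add_zero, zero_add, one_pow, div_one, one_mul]
    ring
  have hHder : HasDerivAt H (deriv h z * (1 - (starRingEnd ℂ) z * z)) 0 := by
    have h0' : HasDerivAt h (deriv h z) (T 0) := by rw [hT0]; exact hzd.hasDerivAt
    exact h0'.comp 0 hTder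
  have hGder : HasDerivAt G
      (deriv h z * (1 - (starRingEnd ℂ) z * z) / (1 - (starRingEnd ℂ) a * a)) 0 := by
    have hnum : HasDerivAt (fun ζ => H ζ - a) (deriv h z * (1 - (starRingEnd ℂ) z * z)) 0 :=
      hHder.sub_const a
    have hden : HasDerivAt (fun ζ => (1:ℂ) - (starRingEnd ℂ) a * H ζ)
        (-((starRingEnd ℂ) a * (deriv h z * (1 - (starRingEnd ℂ) z * z)))) 0 :=
      (hHder.const_mul ((starRingEnd ℂ) a)).const_sub 1
    have hden0 : (1:ℂ) - (starRingEnd ℂ) a * H 0 ≠ 0 :=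
      hGden 0 (mem_ball_self one_pos)
    have hdiv := HasDerivAt.div hnum hden
      (show (fun ζ => (1:ℂ) - (starRingEnd ℂ) a * H ζ) 0 ≠ 0 by simpa using hden0)
    refine hdiv.congr_deriv ?_
    rw [hH0]
    have hne : (1:ℂ) - (starRingEnd ℂ) a * a ≠ 0 := by
      have h12 := hden0; rw [hH0] at h12; exact h12
    rw [sub_self, zero_mul, sub_zero, pow_two, mul_div_mul_right _ _ hne]
  have hval : ‖deriv h z‖ * ‖1 - (starRingEnd ℂ) z * z‖
      / ‖1 - (starRingEnd ℂ) a * a‖ ≤ 1 := by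
    have h11 := hGder.deriv
    rw [h11] at hSchwarz
    rw [norm_div, norm_mul] at hSchwarz
    simpa using hSchwarz
  rw [abs_one_sub_conj_mul_self z hr1, abs_one_sub_conj_mul_self a hA1] at hval
  have hApos : 0 < 1 - (‖a‖)^2 := by nlinarith [norm_nonneg a]
  rw [div_le_one hApos] at hval
  exact hval

lemma re_div_one_sub (ζ : ℂ) (hζ : ‖ζ‖ < 1) :
    -(‖ζ‖/(1 + ‖ζ‖)) ≤ (ζ/(1-ζ)).re := by
  have hne : (1:ℂ) - ζ ≠ 0 := by
    intro h
    have : ζ = 1 := by linear_combination -h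
    rw [this] at hζ; simp at hζ
  have hm : ζ.re^2 + ζ.im^2 = (‖ζ‖)^2 := by
    rw [← Complex.normSq_eq_norm_sq, Complex.normSq_apply]; ring
  have hx : -‖ζ‖ ≤ ζ.re := by
    have h1 := Complex.abs_re_le_norm ζ
    have h2 := neg_abs_le ζ.re
    linarith [abs_nonneg ζ.re, le_abs_self ζ.re]
  have hns : Complex.normSq (1-ζ) = 1 - 2*ζ.re + (‖ζ‖)^2 := by
    have h0 : ((1:ℂ) * (starRingEnd ℂ) ζ).re = ζ.re := by simp
    rw [Complex.normSq_sub, Complex.normSq_one, h0, Complex.normSq_eq_norm_sq]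
    ring
  have hnspos : 0 < Complex.normSq (1-ζ) := Complex.normSq_pos.2 (sub_ne_zero.2 (by
    intro h; rw [← h] at hζ; simp at hζ))
  have hm0 : 0 ≤ ‖ζ‖ := norm_nonneg ζ
  rw [Complex.div_re]
  have h1re : (1-ζ).re = 1 - ζ.re := by simp
  have h1im : (1-ζ).im = -ζ.im := by simp
  rw [h1re, h1im, hns, ← add_div, ← neg_div]
  rw [div_le_div_iff₀ (by positivity) (by rw [hns] at hnspos; exact hnspos)]
  nlinarith [mul_nonneg (sub_nonneg.2 hζ.le) (by linarith : 0 ≤ ζ.re + ‖ζ‖)]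

set_option maxHeartbeats 1000000 in
lemma real_final (α u v r t s s' dphi dpsi : ℝ)
    (hal : 0 ≤ α) (hv : v = 2*t)
    (hr0 : 0 < r) (hr1 : r < 1)
    (ht0 : 0 ≤ t) (hu0 : 0 ≤ u) (hu1 : u ≤ 1)
    (hs0 : 0 ≤ s) (hs1 : s ≤ 1) (hs'0 : 0 ≤ s') (hs'1 : s' ≤ 1)
    (hsv : s * (1 + t*r) ≤ t + r) (hs'v : s' * (1 + u*r) ≤ u + r)
    (hdphi0 : 0 ≤ dphi) (hdphi : dphi * (1 - r^2) ≤ 1 - s^2)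
    (hdpsi0 : 0 ≤ dpsi) (hdpsi : dpsi * (1 - r^2) ≤ 1 - s'^2)
    (hQ : 0 < (1 - α) - α*(u + v)*r - (7 + u*v + α + u*v*α)*r^2 - (8*u + 6*v + u*α)*r^3
      - (9 + 6*u*v - α)*r^4 - (8*u + 2*v - u*α - v*α)*r^5 - (1 + u*v - α - u*v*α)*r^6
      + α*u*r^7) :
    α < 1 - 2*(r^2/(1+r^2)) - 2*r*(s + r*dphi)/(1 - r^2*s^2) - r*(s' + r*dpsi)/(1 - r*s') := by
  subst hv
  have h1r2 : (0:ℝ) < 1 - r^2 := by nlinarith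
  have h1rs : (0:ℝ) < 1 - r*s := by nlinarith
  have h1prs : (0:ℝ) < 1 + r*s := by nlinarith
  have h1rs2 : (0:ℝ) < 1 - r^2*s^2 := by nlinarith [mul_pos h1rs h1prs]
  have h1rs' : (0:ℝ) < 1 - r*s' := by nlinarith
  have hden2 : (0:ℝ) < (1-r^2)*(1+r*s) := by positivity
  have hden3 : (0:ℝ) < 1 + 2*t*r + r^2 := by positivity
  have hden4 : (0:ℝ) < 1 + u*r := by positivity
  -- step 1 : T2 ≤ 2r(s+r)/((1-r²)(1+rs))
  have t2b : 2*r*(s + r*dphi)/(1 - r^2*s^2) ≤ 2*r*(s+r)/((1-r^2)*(1+r*s)) := by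
    rw [div_le_div_iff₀ h1rs2 hden2]
    have hstep : (s + r*dphi)*(1-r^2) ≤ (s+r)*(1-r*s) := by nlinarith
    nlinarith [mul_le_mul_of_nonneg_left hstep (by positivity : (0:ℝ) ≤ 2*r*(1+r*s))]
  -- step 2
  have t2c : 2*r*(s+r)/((1-r^2)*(1+r*s))
      ≤ 2*r*(t*(1+r^2)+2*r)/((1-r^2)*(1+2*t*r+r^2)) := by
    rw [div_le_div_iff₀ hden2 (by positivity)]
    have hstep2 : (s+r)*(1+2*t*r+r^2) ≤ (t*(1+r^2)+2*r)*(1+r*s) := by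
      nlinarith [mul_nonneg (sub_nonneg.2 hsv) h1r2.le]
    nlinarith [mul_le_mul_of_nonneg_left hstep2 (by positivity : (0:ℝ) ≤ 2*r*(1-r^2))]
  -- step 3
  have t3b : r*(s' + r*dpsi)/(1 - r*s') ≤ r*(u*(1+r^2)+2*r)/((1-r^2)*(1+u*r)) := by
    rw [div_le_div_iff₀ h1rs' (by positivity)]
    have hstepA : (s' + r*dpsi)*(1-r^2) ≤ (s'+r)*(1-r*s') := by nlinarith
    have hstepB : (s'+r)*(1+u*r) ≤ u*(1+r^2)+2*r := by nlinarith
    nlinarith [mul_le_mul_of_nonneg_left hstepA (by positivity : (0:ℝ) ≤ r*(1+u*r)),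
      mul_le_mul_of_nonneg_left hstepB (by positivity : (0:ℝ) ≤ r*(1-r*s'))]
  -- final identity
  have hQden : (0:ℝ) < (1+r^2)*((1-r^2)*((1+2*t*r+r^2)*(1+u*r))) := by positivity
  have hid : 1 - 2*(r^2/(1+r^2)) - 2*r*(t*(1+r^2)+2*r)/((1-r^2)*(1+2*t*r+r^2))
      - r*(u*(1+r^2)+2*r)/((1-r^2)*(1+u*r)) - α
      = ((1 - α) - α*(u + 2*t)*r - (7 + u*(2*t) + α + u*(2*t)*α)*r^2 - (8*u + 6*(2*t) + u*α)*r^3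
      - (9 + 6*u*(2*t) - α)*r^4 - (8*u + 2*(2*t) - u*α - (2*t)*α)*r^5
      - (1 + u*(2*t) - α - u*(2*t)*α)*r^6 + α*u*r^7)
        / ((1+r^2)*((1-r^2)*((1+2*t*r+r^2)*(1+u*r)))) := by
    field_simp
    ring
  have hpos : 0 < 1 - 2*(r^2/(1+r^2)) - 2*r*(t*(1+r^2)+2*r)/((1-r^2)*(1+2*t*r+r^2))
      - r*(u*(1+r^2)+2*r)/((1-r^2)*(1+u*r)) - α := by
    rw [hid]
    apply div_pos _ hQden
    exact hQ
  linarith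

lemma mul_dslope_eq {f : ℂ → ℂ} (hf0 : f 0 = 0) (x : ℂ) : x * dslope f 0 x = f x := by
  have h := sub_smul_dslope f 0 x
  rw [hf0, sub_zero, sub_zero, smul_eq_mul] at h
  exact h

lemma iteratedDeriv_two_eq_deriv_dslope {f : ℂ → ℂ} (hf : AnalyticAt ℂ f 0) (hf0 : f 0 = 0) :
    iteratedDeriv 2 f 0 = 2 * deriv (dslope f 0) 0 := by
  set f₁ := dslope f 0 with hf₁
  have h₁ : AnalyticAt ℂ f₁ 0 := by
    obtain ⟨p, hp⟩ := hf
    exact ⟨p.fslope, hp.has_fpower_series_dslope_fslope⟩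
  have hev : ∀ᶠ y in nhds (0:ℂ), AnalyticAt ℂ f₁ y := h₁.eventually_analyticAt
  have hfe : f = fun x => x * f₁ x := funext fun x => (mul_dslope_eq hf0 x).symm
  have E2 : ∀ᶠ ζ in nhds (0:ℂ), deriv f ζ = f₁ ζ + ζ * deriv f₁ ζ := by
    filter_upwards [hev] with ζ hζ
    have hd : HasDerivAt (fun x => x * f₁ x) (1 * f₁ ζ + ζ * deriv f₁ ζ) ζ :=
      (hasDerivAt_id ζ).mul hζ.differentiableAt.hasDerivAt
    rw [hfe, hd.deriv]
    ring
  -- deriv f₁ analytic at 0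
  obtain ⟨s, hs_sub, hs_open, hs_mem⟩ := _root_.mem_nhds_iff.1 hev
  have hAOn : AnalyticOnNhd ℂ f₁ s := fun y hy => hs_sub hy
  have hder_an : AnalyticAt ℂ (deriv f₁) 0 := hAOn.deriv_of_isOpen hs_open 0 hs_mem
  have hR : HasDerivAt (fun ζ => f₁ ζ + ζ * deriv f₁ ζ)
      (deriv f₁ 0 + (1 * deriv f₁ 0 + 0 * deriv (deriv f₁) 0)) 0 :=
    (h₁.differentiableAt.hasDerivAt).add
      ((hasDerivAt_id 0).mul hder_an.differentiableAt.hasDerivAt)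
  have h2 : iteratedDeriv 2 f 0 = deriv (deriv f) 0 := by
    rw [show (2:ℕ) = 1 + 1 from rfl, iteratedDeriv_succ, iteratedDeriv_one]
  rw [h2, Filter.EventuallyEq.deriv_eq E2, hR.deriv]
  ring

set_option maxHeartbeats 4000000 in
theorem stmt_15 (α : ℝ) (hα : 0 ≤ α) (hα1 : α < 1)
    (b c : ℂ) (hb : ‖b‖ ≤ 1) (hc : ‖c‖ ≤ 1)
    (u : ℝ) (hu : u = ‖2 * c - 3 * b‖)
    (v : ℝ) (hv : v = ‖2 * c‖)
    (hu1 : u ≤ 1)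
    (f : ℂ → ℂ) (hf : AnalyticOnNhd ℂ f (Metric.ball (0:ℂ) 1))
    (hf0 : f 0 = 0) (hf1 : deriv f 0 = 1)
    (hf2 : iteratedDeriv 2 f 0 / 2 = 3 * b)
    (hg : ∃ g : ℂ → ℂ, AnalyticOnNhd ℂ g (Metric.ball (0:ℂ) 1) ∧
      g 0 = 0 ∧ deriv g 0 = 1 ∧ iteratedDeriv 2 g 0 / 2 = 2 * c ∧
      ∀ z ∈ Metric.ball (0:ℂ) 1, z ≠ 0 →
        ‖f z / g z - 1‖ < 1 ∧ 0 < (g z * (1 - z ^ 2) / z).re)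
    (ρ : ℝ) (hρ : ρ ∈ Set.Ioo (0:ℝ) 1)
    (hroot : (1 - α) - α*(u + v)*ρ - (7 + u*v + α + u*v*α)*ρ^2 - (8*u + 6*v + u*α)*ρ^3 - (9 + 6*u*v - α)*ρ^4 - (8*u + 2*v - u*α - v*α)*ρ^5 - (1 + u*v - α - u*v*α)*ρ^6 + α*u*ρ^7 = 0)
    (hsmall : ∀ r ∈ Set.Ioo (0:ℝ) 1, (1 - α) - α*(u + v)*r - (7 + u*v + α + u*v*α)*r^2 - (8*u + 6*v + u*α)*r^3 - (9 + 6*u*v - α)*r^4 - (8*u + 2*v - u*α - v*α)*r^5 - (1 + u*v - α - u*v*α)*r^6 + α*u*r^7 = 0 → ρ ≤ r) :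
    ∀ z : ℂ, 0 < ‖z‖ → ‖z‖ < ρ →
      (z * deriv f z / f z).re > α := by
  obtain ⟨g, hgA, hg0, hg1, hg2, hgprop⟩ := hg
  -- polynomial positivity below the smallest root
  set Q : ℝ → ℝ := fun r => (1 - α) - α*(u + v)*r - (7 + u*v + α + u*v*α)*r^2
    - (8*u + 6*v + u*α)*r^3 - (9 + 6*u*v - α)*r^4 - (8*u + 2*v - u*α - v*α)*r^5
    - (1 + u*v - α - u*v*α)*r^6 + α*u*r^7 with hQdef
  have hQcont : Continuous Q := by
    rw [hQdef]; fun_prop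
  have hQ0 : Q 0 = 1 - α := by rw [hQdef]; norm_num
  have hQpos : ∀ r : ℝ, 0 < r → r < ρ → 0 < Q r := by
    intro r hr0 hrρ
    by_contra hle
    push_neg at hle
    have hmem : (0:ℝ) ∈ Set.Icc (Q r) (Q 0) := ⟨hle, by rw [hQ0]; linarith⟩
    obtain ⟨x, hx, hQx⟩ := intermediate_value_Icc' hr0.le hQcont.continuousOn hmem
    have hx0 : 0 < x := by
      rcases lt_or_eq_of_le hx.1 with h | h
      · exact h
      · exfalso; rw [← h] at hQx; rw [hQ0] at hQx; linarith
    have hx1 : x < 1 := lt_trans (lt_of_le_of_lt hx.2 hrρ) hρ.2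
    have := hsmall x ⟨hx0, hx1⟩ hQx
    linarith [hx.2]
  intro z hz0 hzρ
  have hρ1 : ρ < 1 := hρ.2
  have hr1 : ‖z‖ < 1 := lt_trans hzρ hρ1
  have hzball : z ∈ ball (0:ℂ) 1 := mem_ball_zero_iff.2 (by assumption)
  have hzne : z ≠ 0 := by
    intro h; rw [h] at hz0; simp at hz0
  have h0ball : (0:ℂ) ∈ ball (0:ℂ) 1 := mem_ball_self one_pos
  -- dslope functions
  have hfd : DifferentiableOn ℂ f (ball 0 1) := hf.differentiableOn
  have hgd : DifferentiableOn ℂ g (ball 0 1) := hgA.differentiableOn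
  set f₁ := dslope f 0 with hf₁def
  set g₁ := dslope g 0 with hg₁def
  have hf₁d : DifferentiableOn ℂ f₁ (ball 0 1) :=
    (Complex.differentiableOn_dslope (isOpen_ball.mem_nhds h0ball)).mpr hfd
  have hg₁d : DifferentiableOn ℂ g₁ (ball 0 1) :=
    (Complex.differentiableOn_dslope (isOpen_ball.mem_nhds h0ball)).mpr hgd
  have hf₁0 : f₁ 0 = 1 := by rw [hf₁def, dslope_same]; exact hf1
  have hg₁0 : g₁ 0 = 1 := by rw [hg₁def, dslope_same]; exact hg1
  have idf : ∀ x, x * f₁ x = f x := fun x => mul_dslope_eq hf0 x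
  have idg : ∀ x, x * g₁ x = g x := fun x => mul_dslope_eq hg0 x
  have hsq_ne : ∀ ζ : ℂ, ζ ∈ ball (0:ℂ) 1 → (1:ℂ) - ζ^2 ≠ 0 := by
    intro ζ hζ h
    have hζ1 : ‖ζ‖ < 1 := by
      have := mem_ball_zero_iff.1 hζ; exact this
    have h2 : ‖ζ^2‖ < 1 := by
      rw [norm_pow]; nlinarith [norm_nonneg ζ]
    have h3 : ζ^2 = 1 := by linear_combination -h
    rw [h3] at h2; simp at h2
  have hg₁ne : ∀ ζ ∈ ball (0:ℂ) 1, g₁ ζ ≠ 0 := by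
    intro ζ hζ hzero
    rcases eq_or_ne ζ 0 with rfl | hne
    · rw [hg₁0] at hzero; exact one_ne_zero hzero
    · have hgz : g ζ = 0 := by rw [← idg ζ, hzero, mul_zero]
      have h2 := (hgprop ζ hζ hne).2
      rw [hgz] at h2; simp at h2
  -- p, w
  set p := fun ζ : ℂ => g₁ ζ * (1 - ζ^2) with hpdef
  set w := fun ζ : ℂ => f₁ ζ / g₁ ζ - 1 with hwdef
  have hpd : DifferentiableOn ℂ p (ball 0 1) :=
    hg₁d.mul ((differentiableOn_const _).sub (differentiable_pow 2).differentiableOn)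
  have hwd : DifferentiableOn ℂ w (ball 0 1) := (hf₁d.div hg₁d hg₁ne).sub_const 1
  have hp0 : p 0 = 1 := by rw [hpdef]; simp [hg₁0]
  have hw0 : w 0 = 0 := by rw [hwdef]; simp [hf₁0, hg₁0]
  have hpre : ∀ ζ ∈ ball (0:ℂ) 1, 0 < (p ζ).re := by
    intro ζ hζ
    rcases eq_or_ne ζ 0 with rfl | hne
    · rw [hp0]; norm_num
    · have h2 := (hgprop ζ hζ hne).2
      have h3 : p ζ = g ζ * (1 - ζ^2) / ζ := by
        rw [hpdef, ← idg ζ]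
        field_simp
      rw [h3]; exact h2
  have hwlt : ∀ ζ ∈ ball (0:ℂ) 1, ‖w ζ‖ < 1 := by
    intro ζ hζ
    rcases eq_or_ne ζ 0 with rfl | hne
    · rw [hw0]; simp
    · have h1 := (hgprop ζ hζ hne).1
      have h3 : w ζ = f ζ / g ζ - 1 := by
        rw [hwdef]
        simp only
        rw [← idf ζ, ← idg ζ, mul_div_mul_left _ _ hne]
      rw [h3]; exact h1
  -- ω
  set ω := fun ζ : ℂ => (p ζ - 1)/(p ζ + 1) with hωdef
  have hp1ne : ∀ ζ ∈ ball (0:ℂ) 1, p ζ + 1 ≠ 0 := by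
    intro ζ hζ h
    have h1 := hpre ζ hζ
    have h2 : (p ζ + 1).re = (p ζ).re + 1 := by simp
    rw [h] at h2; simp at h2; linarith
  have hωd : DifferentiableOn ℂ ω (ball 0 1) := (hpd.sub_const 1).div (hpd.add_const 1) hp1ne
  have hω0 : ω 0 = 0 := by rw [hωdef]; simp [hp0]
  have hωlt : ∀ ζ ∈ ball (0:ℂ) 1, ‖ω ζ‖ < 1 := by
    intro ζ hζ
    have hre := hpre ζ hζ
    have habs : ‖p ζ + 1‖ ≠ 0 := by
      simpa [norm_ne_zero_iff] using hp1ne ζ hζ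
    have habspos : 0 < ‖p ζ + 1‖ :=
      lt_of_le_of_ne (norm_nonneg _) (Ne.symm habs)
    rw [hωdef]
    simp only
    rw [norm_div, div_lt_one habspos]
    have hns : Complex.normSq (p ζ + 1) - Complex.normSq (p ζ - 1) = 4 * (p ζ).re := by
      simp only [Complex.normSq_apply, Complex.add_re, Complex.add_im, Complex.sub_re,
        Complex.sub_im, Complex.one_re, Complex.one_im]
      ring
    have hn1 := Complex.normSq_eq_norm_sq (p ζ + 1)
    have hn2 := Complex.normSq_eq_norm_sq (p ζ - 1)
    nlinarith [norm_nonneg (p ζ - 1), norm_nonneg (p ζ + 1)]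
  set φ := dslope ω 0 with hφdef
  set ψ := dslope w 0 with hψdef
  have hφd : DifferentiableOn ℂ φ (ball 0 1) :=
    (Complex.differentiableOn_dslope (isOpen_ball.mem_nhds h0ball)).mpr hωd
  have hψd : DifferentiableOn ℂ ψ (ball 0 1) :=
    (Complex.differentiableOn_dslope (isOpen_ball.mem_nhds h0ball)).mpr hwd
  have hωmaps : MapsTo ω (ball 0 1) (ball (ω 0) 1) := by
    rw [hω0]
    intro ζ hζ
    rw [mem_ball_zero_iff]
    exact hωlt ζ hζ
  have hwmaps : MapsTo w (ball 0 1) (ball (w 0) 1) := by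
    rw [hw0]
    intro ζ hζ
    rw [mem_ball_zero_iff]
    exact hwlt ζ hζ
  have hφb : ∀ ζ ∈ ball (0:ℂ) 1, ‖φ ζ‖ ≤ 1 := by
    intro ζ hζ
    have h1 := Complex.norm_dslope_le_div_of_mapsTo_ball hωd (hωmaps.mono_right ball_subset_closedBall) hζ
    simpa [hφdef] using h1
  have hψb : ∀ ζ ∈ ball (0:ℂ) 1, ‖ψ ζ‖ ≤ 1 := by
    intro ζ hζ
    have h1 := Complex.norm_dslope_le_div_of_mapsTo_ball hwd (hwmaps.mono_right ball_subset_closedBall) hζ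
    simpa [hψdef] using h1
  have hωφ : ∀ x, x * φ x = ω x := fun x => mul_dslope_eq hω0 x
  have hwψ : ∀ x, x * ψ x = w x := fun x => mul_dslope_eq hw0 x
  -- center derivatives
  have hg₁'0 : deriv g₁ 0 = 2*c := by
    have h := iteratedDeriv_two_eq_deriv_dslope (hgA 0 h0ball) hg0
    rw [← hg₁def] at h
    have h2 : deriv g₁ 0 = iteratedDeriv 2 g 0 / 2 := by rw [h]; ring
    rw [h2, hg2]
  have hf₁'0 : deriv f₁ 0 = 3*b := by
    have h := iteratedDeriv_two_eq_deriv_dslope (hf 0 h0ball) hf0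
    rw [← hf₁def] at h
    have h2 : deriv f₁ 0 = iteratedDeriv 2 f 0 / 2 := by rw [h]; ring
    rw [h2, hf2]
  have hg₁diff : DifferentiableAt ℂ g₁ 0 := hg₁d.differentiableAt (isOpen_ball.mem_nhds h0ball)
  have hf₁diff : DifferentiableAt ℂ f₁ 0 := hf₁d.differentiableAt (isOpen_ball.mem_nhds h0ball)
  have hpdiff : DifferentiableAt ℂ p 0 := hpd.differentiableAt (isOpen_ball.mem_nhds h0ball)
  have hp'0 : deriv p 0 = 2*c := by
    have hsq : HasDerivAt (fun ζ : ℂ => (1:ℂ) - ζ^2) (-((2:ℕ) * (0:ℂ) ^ (2-1))) 0 :=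
      (hasDerivAt_pow 2 (0:ℂ)).const_sub 1
    have hpder : HasDerivAt p (deriv g₁ 0 * (1 - (0:ℂ)^2) + g₁ 0 * (-((2:ℕ) * (0:ℂ) ^ (2-1)))) 0 :=
      hg₁diff.hasDerivAt.mul hsq
    rw [hpder.deriv, hg₁'0, hg₁0]
    norm_num
  have hφ0 : φ 0 = c := by
    rw [hφdef, dslope_same]
    have hωder : HasDerivAt ω
        ((deriv p 0 * (p 0 + 1) - (p 0 - 1) * deriv p 0)/(p 0 + 1)^2) 0 :=
      (hpdiff.hasDerivAt.sub_const 1).div (hpdiff.hasDerivAt.add_const 1) (hp1ne 0 h0ball)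
    rw [hωder.deriv, hp0, hp'0]
    ring
  have hψ0 : ψ 0 = 3*b - 2*c := by
    rw [hψdef, dslope_same]
    have hwder : HasDerivAt w
        ((deriv f₁ 0 * g₁ 0 - f₁ 0 * deriv g₁ 0)/(g₁ 0)^2) 0 :=
      (hf₁diff.hasDerivAt.div hg₁diff.hasDerivAt (hg₁ne 0 h0ball)).sub_const 1
    rw [hwder.deriv, hf₁0, hg₁0, hf₁'0, hg₁'0]
    ring
  -- abs of centers
  have hφ0abs : ‖φ 0‖ = ‖c‖ := by rw [hφ0]
  have hψ0abs : ‖ψ 0‖ = u := by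
    rw [hψ0, hu, ← neg_sub (2*c) (3*b), norm_neg]
  have hv2 : v = 2 * ‖c‖ := by
    rw [hv, norm_mul, Complex.norm_two]
  -- Schwarz-Pick bounds at z
  have hφz := sp_val hφd hφb hzball
  rw [hφ0abs] at hφz
  have hφz' := sp_deriv hφd hφb hzball
  have hψz := sp_val hψd hψb hzball
  rw [hψ0abs] at hψz
  have hψz' := sp_deriv hψd hψb hzball
  -- nonvanishing at points
  have hne1 : ∀ ζ ∈ ball (0:ℂ) 1, (1:ℂ) - ζ * φ ζ ≠ 0 := by
    intro ζ hζ h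
    have habs : ‖ζ * φ ζ‖ < 1 := by rw [hωφ ζ]; exact hωlt ζ hζ
    have h2 : ζ * φ ζ = 1 := by linear_combination -h
    rw [h2] at habs; simp at habs
  have hne2 : ∀ ζ ∈ ball (0:ℂ) 1, (1:ℂ) + ζ * φ ζ ≠ 0 := by
    intro ζ hζ h
    have habs : ‖ζ * φ ζ‖ < 1 := by rw [hωφ ζ]; exact hωlt ζ hζ
    have h2 : ζ * φ ζ = -1 := by linear_combination h
    rw [h2] at habs; simp at habs
  have hne3 : ∀ ζ ∈ ball (0:ℂ) 1, (1:ℂ) + ζ * ψ ζ ≠ 0 := by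
    intro ζ hζ h
    have habs : ‖ζ * ψ ζ‖ < 1 := by rw [hwψ ζ]; exact hwlt ζ hζ
    have h2 : ζ * ψ ζ = -1 := by linear_combination h
    rw [h2] at habs; simp at habs
  -- the factorization of f
  set N := fun ζ : ℂ => ζ * (1 + ζ * φ ζ) * (1 + ζ * ψ ζ) with hNdef
  set Dq := fun ζ : ℂ => (1 - ζ * φ ζ) * (1 - ζ^2) with hDqdef
  have hfF : ∀ ζ ∈ ball (0:ℂ) 1, f ζ = N ζ / Dq ζ := by
    intro ζ hζ
    have hωne : (1:ℂ) - ω ζ ≠ 0 := by rw [← hωφ ζ]; exact hne1 ζ hζ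
    have e1 : f₁ ζ = g₁ ζ * (1 + w ζ) := by
      simp only [hwdef]
      field_simp [hg₁ne ζ hζ]
      ring
    have e3 : g₁ ζ = p ζ * ((1:ℂ) - ζ^2)⁻¹ := by
      simp only [hpdef]
      field_simp [hsq_ne ζ hζ]
    have e2 : p ζ = (1 + ω ζ) * ((1:ℂ) - ω ζ)⁻¹ := by
      have h2 : (1:ℂ) - ω ζ = 2/(p ζ + 1) := by
        simp only [hωdef]
        field_simp [hp1ne ζ hζ]
        norm_num
      have h3 : (1:ℂ) + ω ζ = 2 * p ζ/(p ζ + 1) := by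
        simp only [hωdef]
        field_simp [hp1ne ζ hζ]
        ring
      rw [h2, h3]
      field_simp [hp1ne ζ hζ]
    calc f ζ = ζ * f₁ ζ := (idf ζ).symm
      _ = ζ * (g₁ ζ * (1 + w ζ)) := by rw [e1]
      _ = ζ * ((p ζ * ((1:ℂ) - ζ^2)⁻¹) * (1 + w ζ)) := by rw [← e3]
      _ = ζ * (((1 + ω ζ) * ((1:ℂ) - ω ζ)⁻¹ * ((1:ℂ) - ζ^2)⁻¹) * (1 + w ζ)) := by
          rw [← e2]
      _ = N ζ / Dq ζ := by
          rw [hNdef, hDqdef]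
          simp only
          rw [← hωφ ζ, ← hwψ ζ]
          rw [eq_div_iff (mul_ne_zero (hne1 ζ hζ) (hsq_ne ζ hζ))]
          field_simp [hne1 ζ hζ, hsq_ne ζ hζ]
  -- derivative at z
  have hφzd : DifferentiableAt ℂ φ z := hφd.differentiableAt (isOpen_ball.mem_nhds hzball)
  have hψzd : DifferentiableAt ℂ ψ z := hψd.differentiableAt (isOpen_ball.mem_nhds hzball)
  have hA : HasDerivAt (fun ζ : ℂ => 1 + ζ * φ ζ) (1 * φ z + z * deriv φ z) z :=
    ((hasDerivAt_id z).mul hφzd.hasDerivAt).const_add 1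
  have hB0 : HasDerivAt (fun ζ : ℂ => 1 - ζ * φ ζ) (-(1 * φ z + z * deriv φ z)) z :=
    ((hasDerivAt_id z).mul hφzd.hasDerivAt).const_sub 1
  have hC0 : HasDerivAt (fun ζ : ℂ => (1:ℂ) - ζ^2) (-((2:ℕ) * z ^ (2-1))) z :=
    (hasDerivAt_pow 2 z).const_sub 1
  have hE : HasDerivAt (fun ζ : ℂ => 1 + ζ * ψ ζ) (1 * ψ z + z * deriv ψ z) z :=
    ((hasDerivAt_id z).mul hψzd.hasDerivAt).const_add 1
  have hAne : (1:ℂ) + z * φ z ≠ 0 := hne2 z hzball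
  have hBne : (1:ℂ) - z * φ z ≠ 0 := hne1 z hzball
  have hCne : (1:ℂ) - z^2 ≠ 0 := hsq_ne z hzball
  have hEne : (1:ℂ) + z * ψ z ≠ 0 := hne3 z hzball
  have hNder : HasDerivAt N
      ((1 * (1 + z * φ z) + z * (1 * φ z + z * deriv φ z)) * (1 + z * ψ z)
        + z * (1 + z * φ z) * (1 * ψ z + z * deriv ψ z)) z :=
    ((hasDerivAt_id z).mul hA).mul hE
  have hDqder : HasDerivAt Dq
      ((-(1 * φ z + z * deriv φ z)) * ((1:ℂ) - z^2)
        + (1 - z * φ z) * (-((2:ℕ) * z ^ (2-1)))) z := hB0.mul hC0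
  have hDqne : Dq z ≠ 0 := by
    rw [hDqdef]
    exact mul_ne_zero hBne hCne
  have hFder := hNder.div hDqder hDqne
  have hderivfz := Filter.EventuallyEq.deriv_eq
    (Filter.eventuallyEq_of_mem (isOpen_ball.mem_nhds hzball) hfF)
  have hderivFz : deriv f z = _ := hderivfz.trans hFder.deriv
  simp only [id_eq, pow_one, one_mul, neg_neg] at hderivFz
  have hNzne : N z ≠ 0 := by
    rw [hNdef]
    exact mul_ne_zero (mul_ne_zero hzne hAne) hEne
  have KEY : z * deriv f z / f z
      = 1 + 2*(z^2/((1:ℂ)-z^2)) + 2*z*(φ z + z * deriv φ z)/(((1:ℂ) - z * φ z)*((1:ℂ) + z * φ z))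
        + z*(ψ z + z * deriv ψ z)/((1:ℂ) + z * ψ z) := by
    rw [hderivFz, hfF z hzball, hNdef, hDqdef]
    simp only
    field_simp [hzne, hAne, hBne, hCne, hEne]
    ring
  -- real part estimates
  have hre_split : (z * deriv f z / f z).re
      = 1 + 2*(z^2/((1:ℂ)-z^2)).re
        + (2*z*(φ z + z * deriv φ z)/(((1:ℂ) - z * φ z)*((1:ℂ) + z * φ z))).re
        + (z*(ψ z + z * deriv ψ z)/((1:ℂ) + z * ψ z)).re := by
    rw [KEY]
    simp [Complex.add_re, Complex.one_re, Complex.mul_re]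
  have hre1 : -((‖z‖)^2/(1+(‖z‖)^2)) ≤ (z^2/((1:ℂ)-z^2)).re := by
    have h1 := re_div_one_sub (z^2) (by rw [norm_pow]; nlinarith [norm_nonneg z])
    rwa [norm_pow] at h1
  have habs_den2 : 1 - (‖z‖)^2*(‖φ z‖)^2
      ≤ ‖((1:ℂ) - z * φ z)*((1:ℂ) + z * φ z)‖ := by
    have h2 : ((1:ℂ) - z * φ z)*((1:ℂ) + z * φ z) = 1 - (z * φ z)^2 := by ring
    rw [h2]
    have h3 := norm_sub_norm_le (1:ℂ) ((z * φ z)^2)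
    rw [norm_one, norm_pow, norm_mul] at h3
    calc 1 - (‖z‖)^2*(‖φ z‖)^2
        = 1 - (‖z‖ * ‖φ z‖)^2 := by ring
      _ ≤ ‖1 - (z * φ z)^2‖ := h3
  have habs_den3 : 1 - ‖z‖ * ‖ψ z‖ ≤ ‖(1:ℂ) + z * ψ z‖ := by
    have h3 := norm_sub_norm_le (1:ℂ) (-(z * ψ z))
    rw [norm_one, norm_neg, norm_mul] at h3
    calc 1 - ‖z‖ * ‖ψ z‖ ≤ ‖1 - -(z * ψ z)‖ := h3
      _ = ‖1 + z * ψ z‖ := by rw [sub_neg_eq_add]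
  have hden2pos : (0:ℝ) < 1 - (‖z‖)^2*(‖φ z‖)^2 := by
    have hssq : (‖φ z‖)^2 ≤ 1 := by
      nlinarith [hφb z hzball, norm_nonneg (φ z)]
    have hrsq : (‖z‖)^2 < 1 := by nlinarith
    nlinarith [mul_le_mul_of_nonneg_left hssq (sq_nonneg (‖z‖))]
  have hden3pos : (0:ℝ) < 1 - ‖z‖ * ‖ψ z‖ := by
    nlinarith [mul_le_mul_of_nonneg_left (hψb z hzball) (norm_nonneg z)]
  have habsX2 : ‖2*z*(φ z + z * deriv φ z)/(((1:ℂ) - z * φ z)*((1:ℂ) + z * φ z))‖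
      ≤ 2*(‖z‖)*(‖φ z‖ + ‖z‖ * ‖deriv φ z‖)
        /(1 - (‖z‖)^2*(‖φ z‖)^2) := by
    rw [norm_div, norm_mul, norm_mul, Complex.norm_two]
    apply div_le_div₀ (by positivity) _ hden2pos habs_den2
    have htri : ‖φ z + z * deriv φ z‖
        ≤ ‖φ z‖ + ‖z‖ * ‖deriv φ z‖ := by
      calc ‖φ z + z * deriv φ z‖
          ≤ ‖φ z‖ + ‖z * deriv φ z‖ := norm_add_le _ _
        _ = ‖φ z‖ + ‖z‖ * ‖deriv φ z‖ := by rw [norm_mul]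
    have := mul_le_mul_of_nonneg_left htri (by positivity : (0:ℝ) ≤ 2 * ‖z‖)
    calc 2 * ‖z‖ * ‖φ z + z * deriv φ z‖
        ≤ 2 * ‖z‖ * (‖φ z‖ + ‖z‖ * ‖deriv φ z‖) :=
          this
      _ = 2*(‖z‖)*(‖φ z‖ + ‖z‖ * ‖deriv φ z‖) := by
          ring
  have habsX3 : ‖z*(ψ z + z * deriv ψ z)/((1:ℂ) + z * ψ z)‖
      ≤ (‖z‖)*(‖ψ z‖ + ‖z‖ * ‖deriv ψ z‖)
        /(1 - ‖z‖ * ‖ψ z‖) := by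
    rw [norm_div, norm_mul]
    apply div_le_div₀ (by positivity) _ hden3pos habs_den3
    have htri : ‖ψ z + z * deriv ψ z‖
        ≤ ‖ψ z‖ + ‖z‖ * ‖deriv ψ z‖ := by
      calc ‖ψ z + z * deriv ψ z‖
          ≤ ‖ψ z‖ + ‖z * deriv ψ z‖ := norm_add_le _ _
        _ = ‖ψ z‖ + ‖z‖ * ‖deriv ψ z‖ := by rw [norm_mul]
    exact mul_le_mul_of_nonneg_left htri (norm_nonneg z)
  have hre2 : -(2*(‖z‖)*(‖φ z‖ + ‖z‖ * ‖deriv φ z‖)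
        /(1 - (‖z‖)^2*(‖φ z‖)^2))
      ≤ (2*z*(φ z + z * deriv φ z)/(((1:ℂ) - z * φ z)*((1:ℂ) + z * φ z))).re := by
    have h1 := Complex.abs_re_le_norm
      (2*z*(φ z + z * deriv φ z)/(((1:ℂ) - z * φ z)*((1:ℂ) + z * φ z)))
    have h2 := abs_le.1 h1
    linarith [h2.1, habsX2]
  have hre3 : -((‖z‖)*(‖ψ z‖ + ‖z‖ * ‖deriv ψ z‖)
        /(1 - ‖z‖ * ‖ψ z‖))
      ≤ (z*(ψ z + z * deriv ψ z)/((1:ℂ) + z * ψ z)).re := by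
    have h1 := Complex.abs_re_le_norm (z*(ψ z + z * deriv ψ z)/((1:ℂ) + z * ψ z))
    have h2 := abs_le.1 h1
    linarith [h2.1, habsX3]
  -- final
  have hfinal := real_final α u v (‖z‖) (‖c‖)
    (‖φ z‖) (‖ψ z‖) (‖deriv φ z‖) (‖deriv ψ z‖)
    hα hv2 hz0 hr1 (norm_nonneg c) (hu ▸ norm_nonneg _) hu1
    (norm_nonneg _) (hφb z hzball) (norm_nonneg _) (hψb z hzball)
    hφz hψz (norm_nonneg _) hφz' (norm_nonneg _) hψz'
    (hQpos (‖z‖) hz0 hzρ)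
  rw [gt_iff_lt, hre_split]
  have hmulφ : (‖z‖)^2*(‖φ z‖)^2
      = (‖z‖)^2*(‖φ z‖)^2 := rfl
  linarith [hre1, hre2, hre3, hfinal]
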